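/- Let X ⊆ ℝ^k be a set all of whose elements are one-hot tiers, and for i ∈ {1,…,k} let e_i ∈ ℝ^k denote the one-hot tier with 1 in position i and 0 elsewhere. Then for every i: if e_i ∈ X then γ̂_i(a^X) = {e_i}, and if e_i ∉ X then γ̂_i(a^X) = ∅. -/

import Mathlib

/-- The flat constant-propagation domain CP = ℝ ∪ {⊥, ⊤}. -/
inductive CP where
  | bot : CP
  | top : CP
  | val : ℝ → CP

/-- The flat partial order on CP: ⊥ ⊑ z ⊑ ⊤ for every z ∈ ℝ,
    distinct reals incomparable. -/
def CP.le : CP → CP → Prop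
  | .bot, _ => True
  | _, .top => True
  | .val x, .val y => x = y
  | _, _ => False

/-- Concretization of CP. -/
def gammaCP : CP → Set ℝ
  | .bot => ∅
  | .top => Set.univ
  | .val z => {z}

open Classical in
/-- Best abstraction of a set of reals in CP. -/
noncomputable def alphaCP (X : Set ℝ) : CP :=
  if X = ∅ then .bot
  else if h : ∃ z : ℝ, X = {z} then .val h.choose
  else .top

/-- Abstract counterpart on CP of a function f : ℝ → ℝ. -/
def fCP (f : ℝ → ℝ) : CP → CP
  | .bot => .bot
  | .top => .top
  | .val z => .val (f z)

/-- The one-hot abstract domain OH_k = (CP × CP)^k. -/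
def OH (k : ℕ) : Type := Fin k → CP × CP

/-- γ̂_i(a): concrete vectors whose i-th component was originally true. -/
def gammaHat {k : ℕ} (i : Fin k) (a : OH k) : Set (Fin k → ℝ) :=
  {x | x i ∈ gammaCP (a i).2 ∧ ∀ j : Fin k, j ≠ i → x j ∈ gammaCP (a j).1}

/-- Concretization of the one-hot abstract domain. -/
def gammaOH {k : ℕ} (a : OH k) : Set (Fin k → ℝ) :=
  ⋃ i : Fin k, gammaHat i a

/-- The one-hot tier with 1 in position i and 0 elsewhere. -/
def oneHot {k : ℕ} (i : Fin k) : Fin k → ℝ := fun j => if j = i then 1 else 0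

/-- A vector is a one-hot tier if it has exactly one index set to 1 and 0 elsewhere. -/
def IsOneHotTier {k : ℕ} (x : Fin k → ℝ) : Prop :=
  ∃! i : Fin k, x i = 1 ∧ ∀ j : Fin k, j ≠ i → x j = 0

/-- The abstract value a^X associated to a set X of one-hot tiers. -/
noncomputable def aX {k : ℕ} (X : Set (Fin k → ℝ)) : OH k :=
  fun i => (alphaCP ((fun x => x i) '' {x ∈ X | x i = 0}),
            alphaCP ((fun x => x i) '' {x ∈ X | x i = 1}))

/-- Abstract counterpart on OH_k of a function f : ℝ → ℝ. -/
def fOH {k : ℕ} (f : ℝ → ℝ) (a : OH k) : OH k :=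
  fun i => (fCP f (a i).1, fCP f (a i).2)

/-- An abstract value of OH_k is top-less when no ⊤ component occurs. -/
def TopLess {k : ℕ} (a : OH k) : Prop :=
  ∀ i : Fin k, (a i).1 ≠ CP.top ∧ (a i).2 ≠ CP.top

/-- Theorem: for a set X of one-hot tiers and every i,
    γ̂_i(a^X) = {e_i} if e_i ∈ X, and γ̂_i(a^X) = ∅ if e_i ∉ X. -/

lemma alphaCP_empty : alphaCP ∅ = CP.bot := by simp [alphaCP]

lemma alphaCP_singleton (z : ℝ) : alphaCP {z} = CP.val z := by
  unfold alphaCP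
  rw [if_neg (by simp), dif_pos ⟨z, rfl⟩]
  have h := (⟨z, rfl⟩ : ∃ w : ℝ, ({z} : Set ℝ) = {w}).choose_spec
  exact congrArg CP.val (Set.singleton_eq_singleton_iff.mp h).symm

lemma tier_eq {k : ℕ} {x : Fin k → ℝ} (h : IsOneHotTier x) {i : Fin k}
    (hi : x i = 1) : x = oneHot i := by
  obtain ⟨j, ⟨hj1, hj0⟩, -⟩ := h
  have hij : i = j := by
    by_contra hne
    exact one_ne_zero (hi ▸ hj0 i hne)
  subst hij
  funext m
  by_cases hm : m = i
  · simp [oneHot, hm, hj1]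
  · simp [oneHot, hm, hj0 m hm]

theorem gammaHat_aX {k : ℕ} (X : Set (Fin k → ℝ))
    (hX : ∀ x ∈ X, IsOneHotTier x) :
    ∀ i : Fin k,
      (oneHot i ∈ X → gammaHat i (aX X) = {oneHot i}) ∧
      (oneHot i ∉ X → gammaHat i (aX X) = (∅ : Set (Fin k → ℝ))) := by
  intro i
  constructor
  · intro hmem
    have h1 : ((fun x => x i) '' {x ∈ X | x i = 1}) = {1} := by
      apply Set.eq_singleton_iff_unique_mem.mpr
      constructor
      · exact ⟨oneHot i, ⟨hmem, by simp [oneHot]⟩, by simp [oneHot]⟩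
      · rintro y ⟨x, ⟨-, hx⟩, rfl⟩; exact hx
    have h0 : ∀ j : Fin k, j ≠ i →
        ((fun x => x j) '' {x ∈ X | x j = 0}) = {0} := by
      intro j hj
      apply Set.eq_singleton_iff_unique_mem.mpr
      constructor
      · exact ⟨oneHot i, ⟨hmem, by simp [oneHot, hj]⟩, by simp [oneHot, hj]⟩
      · rintro y ⟨x, ⟨-, hx⟩, rfl⟩; exact hx
    ext x
    simp only [gammaHat, aX, Set.mem_setOf_eq, Set.mem_singleton_iff]
    rw [h1, alphaCP_singleton]
    constructor
    · rintro ⟨hxi, hall⟩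
      funext m
      by_cases hm : m = i
      · subst hm; simpa [oneHot, gammaCP] using hxi
      · have := hall m hm
        rw [h0 m hm, alphaCP_singleton] at this
        simpa [oneHot, hm, gammaCP] using this
    · rintro rfl
      refine ⟨by simp [oneHot, gammaCP], fun j hj => ?_⟩
      rw [h0 j hj, alphaCP_singleton]
      simp [oneHot, hj, gammaCP]
  · intro hnot
    have hempty : ({x ∈ X | x i = 1} : Set (Fin k → ℝ)) = ∅ := by
      apply Set.eq_empty_iff_forall_notMem.mpr
      rintro x ⟨hxX, hxi⟩
      exact hnot (tier_eq (hX x hxX) hxi ▸ hxX)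
    ext x
    simp only [gammaHat, aX, Set.mem_setOf_eq, Set.mem_empty_iff_false, iff_false]
    rintro ⟨hxi, -⟩
    rw [hempty] at hxi
    simp [alphaCP_empty, gammaCP] at hxi
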